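/- Let ε > 0 and suppose y_ε ≥ 0 minimizes Iᵉ(y) = b·y + (1/(2ε))‖Aᵀy − c‖² over {y ≥ 0}. Then with x_ε := (1/ε)(c − Aᵀ y_ε) one has min_{y ≥ 0} Iᵉ(y) = max_{Ax ≤ b} Jᵉ(x), where Jᵉ(x) = c·x − (ε/2)‖x‖², and the maximum on the right is attained at x_ε. -/

import Mathlib

open Matrix

lemma quad_aux (α β : ℝ) (hβ : 0 ≤ β)
    (h : ∀ t : ℝ, 0 < t → t ≤ 1 → 0 ≤ α * t + β * t ^ 2) : 0 ≤ α := by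
  by_contra hα
  push_neg at hα
  have hden : 0 < 2 * (β + 1) := by linarith
  set t : ℝ := min 1 (-α / (2 * (β + 1))) with ht
  have ht0 : 0 < t := lt_min one_pos (div_pos (by linarith) hden)
  have ht1 : t ≤ 1 := min_le_left _ _
  have ht2 : t ≤ -α / (2 * (β + 1)) := min_le_right _ _
  have h' := h t ht0 ht1
  have ht3 : t * (2 * (β + 1)) ≤ -α := by
    rw [← le_div_iff₀ hden]; exact ht2
  nlinarith [mul_pos ht0 ht0, mul_nonneg hβ ht0.le]

lemma dot_self_nonneg' {k : ℕ} (v : Fin k → ℝ) : 0 ≤ v ⬝ᵥ v :=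
  Finset.sum_nonneg fun i _ => mul_self_nonneg (v i)

lemma transfer {m n : ℕ} (M : Matrix (Fin m) (Fin n) ℝ) (y : Fin m → ℝ) (z : Fin n → ℝ) :
    (Mᵀ.mulVec y) ⬝ᵥ z = y ⬝ᵥ (M.mulVec z) := by
  rw [dotProduct_mulVec, mulVec_transpose]

lemma transfer' {m n : ℕ} (M : Matrix (Fin m) (Fin n) ℝ) (z : Fin n → ℝ) (y : Fin m → ℝ) :
    (M.mulVec z) ⬝ᵥ y = z ⬝ᵥ (Mᵀ.mulVec y) := by
  have := transfer M y z
  rw [dotProduct_comm, ← this, dotProduct_comm]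

/-- Strong duality for the penalized finite-dimensional linear program:
if `yε ≥ 0` minimizes `Iᵉ(y) = b·y + (1/(2ε))‖Aᵀy − c‖²` over `{y ≥ 0}`, then with
`xε := (1/ε)(c − Aᵀ yε)` one has `A xε ≤ b`, `Iᵉ(yε) = Jᵉ(xε)`, and `xε` maximizes
`Jᵉ(x) = c·x − (ε/2)‖x‖²` over `{x : A x ≤ b}`. -/
theorem penalized_strong_duality (m n : ℕ) (A : Matrix (Fin m) (Fin n) ℝ)
    (b : Fin m → ℝ) (c : Fin n → ℝ) (ε : ℝ) (hε : 0 < ε)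
    (yε : Fin m → ℝ) (hy : ∀ i, 0 ≤ yε i)
    (hmin : ∀ y : Fin m → ℝ, (∀ i, 0 ≤ y i) →
      b ⬝ᵥ yε + (1 / (2 * ε)) * ((Aᵀ.mulVec yε - c) ⬝ᵥ (Aᵀ.mulVec yε - c)) ≤
        b ⬝ᵥ y + (1 / (2 * ε)) * ((Aᵀ.mulVec y - c) ⬝ᵥ (Aᵀ.mulVec y - c))) :
    (∀ i, A.mulVec ((1 / ε) • (c - Aᵀ.mulVec yε)) i ≤ b i) ∧
      (b ⬝ᵥ yε + (1 / (2 * ε)) * ((Aᵀ.mulVec yε - c) ⬝ᵥ (Aᵀ.mulVec yε - c)) =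
        c ⬝ᵥ ((1 / ε) • (c - Aᵀ.mulVec yε)) -
          (ε / 2) * (((1 / ε) • (c - Aᵀ.mulVec yε)) ⬝ᵥ ((1 / ε) • (c - Aᵀ.mulVec yε)))) ∧
      (∀ x : Fin n → ℝ, (∀ i, A.mulVec x i ≤ b i) →
        c ⬝ᵥ x - (ε / 2) * (x ⬝ᵥ x) ≤
          c ⬝ᵥ ((1 / ε) • (c - Aᵀ.mulVec yε)) -
            (ε / 2) * (((1 / ε) • (c - Aᵀ.mulVec yε)) ⬝ᵥ ((1 / ε) • (c - Aᵀ.mulVec yε)))) := by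
  have hε' : (ε : ℝ) ≠ 0 := ne_of_gt hε
  set w : Fin n → ℝ := Aᵀ.mulVec yε - c with hw
  set xε : Fin n → ℝ := (1 / ε) • (c - Aᵀ.mulVec yε) with hxε
  have hxw : xε = (-(1 / ε)) • w := by
    rw [hxε, hw]; ext j; simp [smul_eq_mul]; ring
  have hAx : A.mulVec xε = (-(1 / ε)) • A.mulVec w := by
    rw [hxw, mulVec_smul]
  -- variational inequality
  have key : ∀ z : Fin m → ℝ, (∀ i, 0 ≤ z i) →
      0 ≤ (b - A.mulVec xε) ⬝ᵥ (z - yε) := by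
    intro z hz
    set d : Fin m → ℝ := z - yε with hd
    set u : Fin n → ℝ := Aᵀ.mulVec d with hu
    have hβ : 0 ≤ (1 / (2 * ε)) * (u ⬝ᵥ u) :=
      mul_nonneg (by positivity) (dot_self_nonneg' u)
    have hcomm : u ⬝ᵥ w = w ⬝ᵥ u := dotProduct_comm u w
    have halpha : (b - A.mulVec xε) ⬝ᵥ d = b ⬝ᵥ d + (1 / ε) * (w ⬝ᵥ u) := by
      rw [sub_dotProduct, hAx, smul_dotProduct, transfer' A w d, ← hu, smul_eq_mul]
      ring
    rw [halpha]
    apply quad_aux _ _ hβ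
    intro t ht0 ht1
    have hznn : ∀ i, 0 ≤ (yε + t • d) i := by
      intro i
      have : (yε + t • d) i = (1 - t) * yε i + t * z i := by
        simp [hd, smul_eq_mul]; ring
      rw [this]
      have := hz i
      have := hy i
      nlinarith
    have h' := hmin (yε + t • d) hznn
    have hAt : Aᵀ.mulVec (yε + t • d) - c = w + t • u := by
      rw [mulVec_add, mulVec_smul, hu, hw]; ext i
      simp only [Pi.add_apply, Pi.sub_apply, Pi.smul_apply, smul_eq_mul]; ring
    rw [hAt] at h'
    have hexp : b ⬝ᵥ (yε + t • d) + 1 / (2 * ε) * ((w + t • u) ⬝ᵥ (w + t • u)) =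
        (b ⬝ᵥ yε + 1 / (2 * ε) * (w ⬝ᵥ w)) +
          ((b ⬝ᵥ d + 1 / ε * (w ⬝ᵥ u)) * t + (1 / (2 * ε)) * (u ⬝ᵥ u) * t ^ 2) := by
      simp only [dotProduct_add, add_dotProduct, dotProduct_smul, smul_dotProduct,
        smul_eq_mul, hcomm]
      field_simp
      ring
    rw [hexp] at h'
    linarith
  -- gradient nonnegativity
  have hgrad : ∀ i, 0 ≤ b i - A.mulVec xε i := by
    intro i
    have h1 := key (yε + Pi.single i 1) (by
      intro j
      have : (0:ℝ) ≤ (Pi.single i (1:ℝ) : Fin m → ℝ) j := by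
        rcases eq_or_ne j i with h | h <;> simp [Pi.single_apply, h]
      have := hy j
      simp only [Pi.add_apply]
      linarith)
    rw [add_sub_cancel_left, dotProduct_single] at h1
    simpa using h1
  -- complementary slackness
  have hcs : (b - A.mulVec xε) ⬝ᵥ yε = 0 := by
    apply le_antisymm
    · have h0 := key 0 (fun i => le_refl 0)
      rw [zero_sub, dotProduct_neg] at h0
      linarith
    · exact Finset.sum_nonneg fun i _ => mul_nonneg (hgrad i) (hy i)
  have hwc : Aᵀ.mulVec yε = w + c := by rw [hw]; ext i; simp
  refine ⟨fun i => by have := hgrad i; linarith, ?_, ?_⟩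
  · -- strong duality equality
    have e1 : c ⬝ᵥ xε = -(1/ε) * (c ⬝ᵥ w) := by
      rw [hxw, dotProduct_smul, smul_eq_mul]
    have e2 : xε ⬝ᵥ xε = (1/ε)^2 * (w ⬝ᵥ w) := by
      rw [hxw, smul_dotProduct, dotProduct_smul, smul_eq_mul, smul_eq_mul]; ring
    have e3 : b ⬝ᵥ yε = -(1/ε) * (w ⬝ᵥ w) + -(1/ε) * (c ⬝ᵥ w) := by
      have h0 := hcs
      rw [sub_dotProduct] at h0
      have h1 : (A.mulVec xε) ⬝ᵥ yε = xε ⬝ᵥ (Aᵀ.mulVec yε) := transfer' A xε yε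
      rw [h1, hwc, dotProduct_add, hxw, smul_dotProduct, smul_dotProduct,
        smul_eq_mul, smul_eq_mul, dotProduct_comm w c] at h0
      linarith
    rw [e3, e1, e2]
    field_simp
    ring
  · -- optimality of xε
    intro x hx
    have hc' : c = ε • xε + Aᵀ.mulVec yε := by
      rw [hxε]; ext i; simp [smul_eq_mul]; field_simp; ring
    have f1 : c ⬝ᵥ x = ε * (xε ⬝ᵥ x) + yε ⬝ᵥ A.mulVec x := by
      rw [hc', add_dotProduct, smul_dotProduct, smul_eq_mul, transfer A yε x]
    have f2 : c ⬝ᵥ xε = ε * (xε ⬝ᵥ xε) + yε ⬝ᵥ A.mulVec xε := by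
      rw [hc', add_dotProduct, smul_dotProduct, smul_eq_mul, transfer A yε xε]
    have f5 : yε ⬝ᵥ A.mulVec xε = yε ⬝ᵥ b := by
      have h0 := hcs
      rw [sub_dotProduct, dotProduct_comm b yε, dotProduct_comm (A.mulVec xε) yε] at h0
      linarith
    have f6 : yε ⬝ᵥ A.mulVec x ≤ yε ⬝ᵥ b :=
      Finset.sum_le_sum fun i _ => mul_le_mul_of_nonneg_left (hx i) (hy i)
    have f7 : 0 ≤ xε ⬝ᵥ xε - 2 * (xε ⬝ᵥ x) + x ⬝ᵥ x := by
      have h0 := dot_self_nonneg' (xε - x)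
      have hc2 : x ⬝ᵥ xε = xε ⬝ᵥ x := dotProduct_comm _ _
      rw [sub_dotProduct, dotProduct_sub, dotProduct_sub, hc2] at h0
      linarith
    have f8 : 0 ≤ ε * (xε ⬝ᵥ xε - 2 * (xε ⬝ᵥ x) + x ⬝ᵥ x) := mul_nonneg hε.le f7
    rw [f1, f2]
    nlinarith [f5, f6, f8]
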